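/- For all n ≥ 2, the number of nonnesting permutations of the multiset {1,1,2,2,…,n,n} that avoid both patterns 132 and 231 equals 2^n. -/

import Mathlib

/-- `w` is a permutation of the multiset `{1,1,2,2,…,n,n}`:
a word in which every value in `{1,…,n}` occurs exactly twice
and no other value occurs. -/
def IsMultisetPerm (n : ℕ) (w : List ℕ) : Prop :=
  ∀ i : ℕ, w.count i = if 1 ≤ i ∧ i ≤ n then 2 else 0

/-- `t` is order-isomorphic to the word `σ`:
same length, and entries compare (both `<` and `=`) in the same way. -/
def OrderIsoWord (t σ : List ℕ) : Prop :=
  t.length = σ.length ∧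
  ∀ r s : ℕ, r < σ.length → s < σ.length →
    ((t.getD r 0 < t.getD s 0 ↔ σ.getD r 0 < σ.getD s 0) ∧
     (t.getD r 0 = t.getD s 0 ↔ σ.getD r 0 = σ.getD s 0))

/-- `w` contains the pattern `σ`: some subsequence of `w`
is order-isomorphic to `σ`. -/
def Contains (w σ : List ℕ) : Prop :=
  ∃ t : List ℕ, t.Sublist w ∧ OrderIsoWord t σ

/-- `w` avoids the pattern `σ`. -/
def Avoids (w σ : List ℕ) : Prop := ¬ Contains w σ

/-- `w` is a nonnesting permutation of `{1,1,2,2,…,n,n}`: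
it avoids the patterns `1221` and `2112`. -/
def IsNonnesting (n : ℕ) (w : List ℕ) : Prop :=
  IsMultisetPerm n w ∧ Avoids w [1,2,2,1] ∧ Avoids w [2,1,1,2]

lemma contains1221_iff (w : List ℕ) :
    Contains w [1,2,2,1] ↔ ∃ a b : ℕ, a < b ∧ List.Sublist [a,b,b,a] w := by
  constructor
  · rintro ⟨t, hsub, hlen, hrel⟩
    rcases t with _|⟨a,_|⟨b,_|⟨c,_|⟨d,_|e⟩⟩⟩⟩ <;> simp at hlen
    have h01 := (hrel 0 1 (by norm_num) (by norm_num)).1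
    have h12 := (hrel 1 2 (by norm_num) (by norm_num)).2
    have h03 := (hrel 0 3 (by norm_num) (by norm_num)).2
    simp [List.getD] at h01 h12 h03
    subst h12 h03
    exact ⟨a, b, h01, hsub⟩
  · rintro ⟨a, b, hab, hsub⟩
    refine ⟨[a,b,b,a], hsub, by simp, ?_⟩
    intro r s hr hs
    simp only [List.length_cons, List.length_nil] at hr hs
    interval_cases r <;> interval_cases s <;> simp [List.getD] <;> omega

lemma contains2112_iff (w : List ℕ) :
    Contains w [2,1,1,2] ↔ ∃ a b : ℕ, a < b ∧ List.Sublist [b,a,a,b] w := by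
  constructor
  · rintro ⟨t, hsub, hlen, hrel⟩
    rcases t with _|⟨a,_|⟨b,_|⟨c,_|⟨d,_|e⟩⟩⟩⟩ <;> simp at hlen
    have h01 := (hrel 1 0 (by norm_num) (by norm_num)).1
    have h12 := (hrel 1 2 (by norm_num) (by norm_num)).2
    have h03 := (hrel 0 3 (by norm_num) (by norm_num)).2
    simp [List.getD] at h01 h12 h03
    subst h12 h03
    exact ⟨b, a, h01, hsub⟩
  · rintro ⟨a, b, hab, hsub⟩
    refine ⟨[b,a,a,b], hsub, by simp, ?_⟩
    intro r s hr hs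
    simp only [List.length_cons, List.length_nil] at hr hs
    interval_cases r <;> interval_cases s <;> simp [List.getD] <;> omega

lemma contains132_iff (w : List ℕ) :
    Contains w [1,3,2] ↔ ∃ a b c : ℕ, a < c ∧ c < b ∧ List.Sublist [a,b,c] w := by
  constructor
  · rintro ⟨t, hsub, hlen, hrel⟩
    rcases t with _|⟨a,_|⟨b,_|⟨c,_|e⟩⟩⟩ <;> simp at hlen
    have h02 := (hrel 0 2 (by norm_num) (by norm_num)).1
    have h21 := (hrel 2 1 (by norm_num) (by norm_num)).1
    simp [List.getD] at h02 h21
    exact ⟨a, b, c, h02, h21, hsub⟩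
  · rintro ⟨a, b, c, hac, hcb, hsub⟩
    refine ⟨[a,b,c], hsub, by simp, ?_⟩
    intro r s hr hs
    simp only [List.length_cons, List.length_nil] at hr hs
    interval_cases r <;> interval_cases s <;> simp [List.getD] <;> omega

lemma contains231_iff (w : List ℕ) :
    Contains w [2,3,1] ↔ ∃ a b c : ℕ, c < a ∧ a < b ∧ List.Sublist [a,b,c] w := by
  constructor
  · rintro ⟨t, hsub, hlen, hrel⟩
    rcases t with _|⟨a,_|⟨b,_|⟨c,_|e⟩⟩⟩ <;> simp at hlen
    have h20 := (hrel 2 0 (by norm_num) (by norm_num)).1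
    have h01 := (hrel 0 1 (by norm_num) (by norm_num)).1
    simp [List.getD] at h20 h01
    exact ⟨a, b, c, h20, h01, hsub⟩
  · rintro ⟨a, b, c, hca, hab, hsub⟩
    refine ⟨[a,b,c], hsub, by simp, ?_⟩
    intro r s hr hs
    simp only [List.length_cons, List.length_nil] at hr hs
    interval_cases r <;> interval_cases s <;> simp [List.getD] <;> omega

lemma sublist_rev_iff {t w : List ℕ} : t.Sublist w.reverse ↔ t.reverse.Sublist w := by
  constructor
  · intro h
    have := List.reverse_sublist.2 h
    simpa using this
  · intro h
    have := List.reverse_sublist.2 h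
    simpa using this

lemma avoid1221_rev {w : List ℕ} : Avoids w.reverse [1,2,2,1] ↔ Avoids w [1,2,2,1] := by
  unfold Avoids
  rw [contains1221_iff, contains1221_iff]
  constructor
  · intro h ⟨a,b,hab,hs⟩
    exact h ⟨a,b,hab, by rw [sublist_rev_iff]; simpa using hs⟩
  · intro h ⟨a,b,hab,hs⟩
    rw [sublist_rev_iff] at hs
    exact h ⟨a,b,hab, by simpa using hs⟩

lemma avoid2112_rev {w : List ℕ} : Avoids w.reverse [2,1,1,2] ↔ Avoids w [2,1,1,2] := by
  unfold Avoids
  rw [contains2112_iff, contains2112_iff]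
  constructor
  · intro h ⟨a,b,hab,hs⟩
    exact h ⟨a,b,hab, by rw [sublist_rev_iff]; simpa using hs⟩
  · intro h ⟨a,b,hab,hs⟩
    rw [sublist_rev_iff] at hs
    exact h ⟨a,b,hab, by simpa using hs⟩

lemma avoid132_rev {w : List ℕ} : Avoids w.reverse [1,3,2] ↔ Avoids w [2,3,1] := by
  unfold Avoids
  rw [contains132_iff, contains231_iff]
  constructor
  · intro h ⟨a,b,c,hca,hab,hs⟩
    exact h ⟨c,b,a,hca,hab, by rw [sublist_rev_iff]; simpa using hs⟩
  · intro h ⟨a,b,c,hac,hcb,hs⟩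
    rw [sublist_rev_iff] at hs
    exact h ⟨c,b,a,hac,hcb, by simpa using hs⟩

lemma avoid231_rev {w : List ℕ} : Avoids w.reverse [2,3,1] ↔ Avoids w [1,3,2] := by
  unfold Avoids
  rw [contains231_iff, contains132_iff]
  constructor
  · intro h ⟨a,b,c,hac,hcb,hs⟩
    exact h ⟨c,b,a,hac,hcb, by rw [sublist_rev_iff]; simpa using hs⟩
  · intro h ⟨a,b,c,hca,hab,hs⟩
    rw [sublist_rev_iff] at hs
    exact h ⟨c,b,a,hca,hab, by simpa using hs⟩

-- cons preservation
lemma avoid1221_cons {w : List ℕ} {n : ℕ} (hb : ∀ x ∈ w, x < n)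
    (hav : Avoids w [1,2,2,1]) : Avoids (n::n::w) [1,2,2,1] := by
  intro h
  obtain ⟨a, b, hab, hs⟩ := (contains1221_iff _).1 h
  apply hav
  rw [contains1221_iff]
  refine ⟨a, b, hab, ?_⟩
  have hbn : b ≤ n := by
    have h' : b ∈ n::n::w := hs.subset (by simp)
    simp only [List.mem_cons] at h'
    rcases h' with rfl | rfl | h'
    · exact le_refl _
    · exact le_refl _
    · exact le_of_lt (hb _ h')
  have han : a < n := lt_of_lt_of_le hab hbn
  rcases List.sublist_cons_iff.1 hs with hs' | ⟨r, hr, _⟩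
  · rcases List.sublist_cons_iff.1 hs' with hs'' | ⟨r, hr, _⟩
    · exact hs''
    · simp at hr; omega
  · simp at hr; omega

lemma avoid2112_cons {w : List ℕ} {n : ℕ} (hb : ∀ x ∈ w, x < n)
    (hav : Avoids w [2,1,1,2]) : Avoids (n::n::w) [2,1,1,2] := by
  intro h
  obtain ⟨a, b, hab, hs⟩ := (contains2112_iff _).1 h
  apply hav
  rw [contains2112_iff]
  refine ⟨a, b, hab, ?_⟩
  rcases List.sublist_cons_iff.1 hs with hs' | ⟨r, hr, hr'⟩
  · rcases List.sublist_cons_iff.1 hs' with hs'' | ⟨r, hr, hr'⟩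
    · exact hs''
    · obtain ⟨h1, h2⟩ : b = n ∧ [a,a,b] = r := by simpa using hr
      subst h2
      have : b ∈ w := hr'.subset (by simp)
      have := hb _ this
      omega
  · obtain ⟨h1, h2⟩ : b = n ∧ [a,a,b] = r := by simpa using hr
    subst h2
    rcases List.sublist_cons_iff.1 hr' with hs'' | ⟨r2, hr2, hr2'⟩
    · have : b ∈ w := hs''.subset (by simp)
      have := hb _ this
      omega
    · have han : a = n := by
        have h3 := hr2
        simp at h3
        exact h3.1
      omega

lemma avoid132_cons {w : List ℕ} {n : ℕ} (hb : ∀ x ∈ w, x < n)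
    (hav : Avoids w [1,3,2]) : Avoids (n::n::w) [1,3,2] := by
  intro h
  obtain ⟨a, b, c, hac, hcb, hs⟩ := (contains132_iff _).1 h
  apply hav
  rw [contains132_iff]
  refine ⟨a, b, c, hac, hcb, ?_⟩
  have hbn : b ≤ n := by
    have h' : b ∈ n::n::w := hs.subset (by simp)
    simp only [List.mem_cons] at h'
    rcases h' with rfl | rfl | h'
    · exact le_refl _
    · exact le_refl _
    · exact le_of_lt (hb _ h')
  have han : a < n := by omega
  rcases List.sublist_cons_iff.1 hs with hs' | ⟨r, hr, _⟩
  · rcases List.sublist_cons_iff.1 hs' with hs'' | ⟨r, hr, _⟩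
    · exact hs''
    · simp at hr; omega
  · simp at hr; omega

lemma avoid231_cons {w : List ℕ} {n : ℕ} (hb : ∀ x ∈ w, x < n)
    (hav : Avoids w [2,3,1]) : Avoids (n::n::w) [2,3,1] := by
  intro h
  obtain ⟨a, b, c, hca, hab, hs⟩ := (contains231_iff _).1 h
  apply hav
  rw [contains231_iff]
  refine ⟨a, b, c, hca, hab, ?_⟩
  have hbn : b ≤ n := by
    have h' : b ∈ n::n::w := hs.subset (by simp)
    simp only [List.mem_cons] at h'
    rcases h' with rfl | rfl | h'
    · exact le_refl _
    · exact le_refl _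
    · exact le_of_lt (hb _ h')
  have han : a < n := by omega
  rcases List.sublist_cons_iff.1 hs with hs' | ⟨r, hr, _⟩
  · rcases List.sublist_cons_iff.1 hs' with hs'' | ⟨r, hr, _⟩
    · exact hs''
    · simp at hr; omega
  · simp at hr; omega

-- chunk d: multiset perm facts and Sset closure
def Sset (n : ℕ) : Set (List ℕ) :=
  {w | IsNonnesting n w ∧ Avoids w [1,3,2] ∧ Avoids w [2,3,1]}

lemma mp_mem {n : ℕ} {w : List ℕ} (h : IsMultisetPerm n w) {x : ℕ} (hx : x ∈ w) :
    1 ≤ x ∧ x ≤ n := by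
  have hc : 0 < w.count x := List.count_pos_iff.2 hx
  have := h x
  by_contra hcon
  rw [if_neg hcon] at this
  omega

lemma mp_mem_of {n : ℕ} {w : List ℕ} (h : IsMultisetPerm n w) {x : ℕ}
    (h1 : 1 ≤ x) (h2 : x ≤ n) : x ∈ w := by
  have := h x
  rw [if_pos ⟨h1, h2⟩] at this
  exact List.count_pos_iff.1 (by omega)

lemma mp_lt {n : ℕ} {w : List ℕ} (h : IsMultisetPerm n w) : ∀ x ∈ w, x < n + 1 := by
  intro x hx
  have := (mp_mem h hx).2
  omega

lemma mp_rev {n : ℕ} {w : List ℕ} (h : IsMultisetPerm n w) :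
    IsMultisetPerm n w.reverse := by
  intro i
  rw [List.count_reverse]
  exact h i

lemma mp_cons {n : ℕ} {w : List ℕ} (h : IsMultisetPerm n w) :
    IsMultisetPerm (n+1) ((n+1)::(n+1)::w) := by
  intro i
  have hw := h i
  simp only [List.count_cons, beq_iff_eq]
  split_ifs at hw ⊢ <;> omega

lemma mp_cons_inv {n : ℕ} {w : List ℕ} (h : IsMultisetPerm (n+1) ((n+1)::(n+1)::w)) :
    IsMultisetPerm n w := by
  intro i
  have hw := h i
  simp only [List.count_cons, beq_iff_eq] at hw
  split_ifs at hw ⊢ <;> omega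

lemma mp_snoc_inv {n : ℕ} {w : List ℕ}
    (h : IsMultisetPerm (n+1) (w ++ [n+1,n+1])) : IsMultisetPerm n w := by
  have h' : IsMultisetPerm (n+1) ((n+1)::(n+1)::w.reverse) := by
    have := mp_rev h
    simpa using this
  have := mp_cons_inv h'
  have := mp_rev this
  simpa using this

lemma avoids_of_sublist {w v σ : List ℕ} (hs : v.Sublist w) (h : Avoids w σ) :
    Avoids v σ := by
  rintro ⟨t, ht, hiso⟩
  exact h ⟨t, ht.trans hs, hiso⟩

lemma mem_Sset_rev {n : ℕ} {w : List ℕ} (h : w ∈ Sset n) : w.reverse ∈ Sset n := by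
  obtain ⟨⟨hp, h1, h2⟩, h3, h4⟩ := h
  refine ⟨⟨mp_rev hp, ?_, ?_⟩, ?_, ?_⟩
  · exact avoid1221_rev.2 h1
  · exact avoid2112_rev.2 h2
  · exact avoid132_rev.2 h4
  · exact avoid231_rev.2 h3

lemma cons_mem_Sset {n : ℕ} {w : List ℕ} (h : w ∈ Sset n) :
    ((n+1)::(n+1)::w) ∈ Sset (n+1) := by
  obtain ⟨⟨hp, h1, h2⟩, h3, h4⟩ := h
  have hb : ∀ x ∈ w, x < n + 1 := mp_lt hp
  exact ⟨⟨mp_cons hp, avoid1221_cons hb h1, avoid2112_cons hb h2⟩,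
    avoid132_cons hb h3, avoid231_cons hb h4⟩

lemma snoc_mem_Sset {n : ℕ} {w : List ℕ} (h : w ∈ Sset n) :
    (w ++ [n+1,n+1]) ∈ Sset (n+1) := by
  have h1 := cons_mem_Sset (mem_Sset_rev h)
  have h2 := mem_Sset_rev h1
  simpa using h2

-- chunk e: hard direction
lemma exists_split_first {a : ℕ} {l : List ℕ} (h : a ∈ l) :
    ∃ s t, l = s ++ a :: t ∧ a ∉ s := by
  induction l with
  | nil => simp at h
  | cons x xs ih =>
    by_cases hx : x = a
    · exact ⟨[], xs, by simp [hx], by simp⟩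
    · have h' : a ∈ xs := by
        rcases List.mem_cons.1 h with h | h
        · exact absurd h.symm hx
        · exact h
      obtain ⟨s, t, rfl, hs⟩ := ih h'
      refine ⟨x::s, t, by simp, ?_⟩
      simp only [List.mem_cons, not_or]
      exact ⟨fun he => hx he.symm, hs⟩

lemma step_decomp {m : ℕ} (hm : 2 ≤ m) {w : List ℕ} (hw : w ∈ Sset (m+1)) :
    (∃ w', w = (m+1)::(m+1)::w' ∧ w' ∈ Sset m) ∨
    (∃ w', w = w' ++ [m+1,m+1] ∧ w' ∈ Sset m) := by
  obtain ⟨⟨hp, h1221, h2112⟩, h132, h231⟩ := hw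
  set N := m + 1 with hN
  have hNw : N ∈ w := mp_mem_of hp (by omega) (by omega)
  obtain ⟨u, r, hwur, hNu⟩ := exists_split_first hNw
  have hcount : w.count N = 2 := by
    have := hp N; rw [if_pos (by omega)] at this; exact this
  have hcu : u.count N = 0 := List.count_eq_zero_of_not_mem hNu
  have hcr : r.count N = 1 := by
    rw [hwur] at hcount
    simp [List.count_append, List.count_cons, hcu] at hcount
    omega
  have hNr : N ∈ r := List.count_pos_iff.1 (by omega)
  obtain ⟨v, z, hrvz, hNv⟩ := exists_split_first hNr
  have hcv : v.count N = 0 := List.count_eq_zero_of_not_mem hNv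
  have hcz : z.count N = 0 := by
    rw [hrvz] at hcr
    simp [List.count_append, List.count_cons, hcv] at hcr
    omega
  have hwe : w = u ++ N :: (v ++ N :: z) := by rw [hwur, hrvz]
  -- element bounds
  have hu_lt : ∀ x ∈ u, x < N := by
    intro x hx
    have hxw : x ∈ w := by rw [hwe]; simp [hx]
    have h2 := (mp_mem hp hxw).2
    have h3 : x ≠ N := fun he => hNu (he ▸ hx)
    omega
  have hv_lt : ∀ x ∈ v, x < N := by
    intro x hx
    have hxw : x ∈ w := by rw [hwe]; simp [hx]
    have h2 := (mp_mem hp hxw).2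
    have h3 : x ≠ N := fun he => hNv (he ▸ hx)
    omega
  have hz_lt : ∀ x ∈ z, x < N := by
    intro x hx
    have hxw : x ∈ w := by rw [hwe]; simp [hx]
    have h2 := (mp_mem hp hxw).2
    have h3 : x ≠ N := by
      intro he
      have := List.count_pos_iff.2 (he ▸ hx)
      omega
    omega
  -- sublist builders
  have hsub_uz : ∀ a c, a ∈ u → c ∈ z → List.Sublist [a, N, c] w := by
    intro a c ha hc
    rw [hwe]
    have h1 : List.Sublist [a] u := List.singleton_sublist.2 ha
    have h2 : List.Sublist [c] z := List.singleton_sublist.2 hc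
    have h3 : List.Sublist [c] (v ++ N :: z) :=
      (h2.cons N).trans (List.sublist_append_right v (N :: z))
    exact List.Sublist.append h1 (h3.cons₂ N)
  have hsub_uv : ∀ a x, a ∈ u → x ∈ v → List.Sublist [a, N, x] w := by
    intro a x ha hx
    rw [hwe]
    have h1 : List.Sublist [a] u := List.singleton_sublist.2 ha
    have h2 : List.Sublist [x] v := List.singleton_sublist.2 hx
    have h3 : List.Sublist [x] (v ++ N :: z) :=
      h2.trans (List.sublist_append_left v (N :: z))
    exact List.Sublist.append h1 (h3.cons₂ N)
  have hsub_vz : ∀ x c, x ∈ v → c ∈ z → List.Sublist [x, N, c] w := by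
    intro x c hx hc
    rw [hwe]
    have h1 : List.Sublist [x] v := List.singleton_sublist.2 hx
    have h2 : List.Sublist [c] z := List.singleton_sublist.2 hc
    have h3 : List.Sublist ([x] ++ N :: [c]) (v ++ N :: z) :=
      List.Sublist.append h1 (h2.cons₂ N)
    exact ((h3.cons N).trans (List.sublist_append_right u _))
  have hsub_nn : ∀ x, 2 ≤ v.count x → List.Sublist [N, x, x, N] w := by
    intro x hx
    have h2 : List.Sublist [x, x] v := List.replicate_sublist_iff.2 hx
    have h3 : List.Sublist ([x,x] ++ [N]) (v ++ N :: z) :=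
      List.Sublist.append h2 ((List.nil_sublist z).cons₂ N)
    have h4 := h3.cons₂ N
    rw [hwe]
    exact h4.trans (List.sublist_append_right u _)
  -- key equality from 132/231 avoidance
  have keyeq : ∀ a c : ℕ, a < N → c < N → List.Sublist [a, N, c] w → a = c := by
    intro a c ha hc hs
    by_contra hne
    rcases Nat.lt_or_ge a c with h | h
    · exact h132 ((contains132_iff w).2 ⟨a, N, c, h, hc, hs⟩)
    · have h' : c < a := by omega
      exact h231 ((contains231_iff w).2 ⟨a, N, c, h', ha, hs⟩)
  have hvcount : ∀ x, v.count x ≤ 1 := by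
    intro x
    by_contra hx
    push_neg at hx
    have hxv : x ∈ v := List.count_pos_iff.1 (by omega)
    have hxlt : x < N := hv_lt x hxv
    exact h2112 ((contains2112_iff w).2 ⟨x, N, hxlt, hsub_nn x (by omega)⟩)
  have hcnt : ∀ y, 1 ≤ y → y < N → u.count y + v.count y + z.count y = 2 := by
    intro y hy1 hylt
    have h0 := hp y
    rw [hwe] at h0
    rw [if_pos ⟨hy1, by omega⟩] at h0
    have h6 : ¬ (N = y) := by omega
    have h7 : ¬ (y = N) := by omega
    simp only [List.count_append, List.count_cons, beq_iff_eq, h6, h7, if_false] at h0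
    omega
  by_cases hv : v = []
  · subst hv
    by_cases hu : u = []
    · subst hu
      left
      have hwe' : w = N :: N :: z := by simpa using hwe
      refine ⟨z, hwe', ?_⟩
      have hsz : List.Sublist z w := by
        rw [hwe']
        exact (List.sublist_cons_self N z).trans (List.sublist_cons_self N (N :: z))
      exact ⟨⟨mp_cons_inv (hwe' ▸ hp), avoids_of_sublist hsz h1221,
        avoids_of_sublist hsz h2112⟩,
        avoids_of_sublist hsz h132, avoids_of_sublist hsz h231⟩
    · right
      obtain ⟨a, ha⟩ := List.exists_mem_of_ne_nil u hu
      have hz : z = [] := by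
        rcases z with _ | ⟨c, z'⟩
        · rfl
        · exfalso
          have hc : c ∈ c :: z' := by simp
          have halt := hu_lt a ha
          have hclt := hz_lt c hc
          have hac : a = c := keyeq a c halt hclt (hsub_uz a c ha hc)
          obtain ⟨y, hy1, hylt2, hyne⟩ : ∃ y : ℕ, 1 ≤ y ∧ y < N ∧ y ≠ a := by
            by_cases h : a = 1
            · exact ⟨2, by omega, by omega, by omega⟩
            · exact ⟨1, by omega, by omega, by omega⟩
          have hyw : y ∈ w := mp_mem_of hp hy1 (by omega)
          rw [hwe] at hyw
          simp only [List.mem_append, List.mem_cons, List.mem_nil_iff, or_false,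
            List.nil_append] at hyw
          rcases hyw with h5 | h5 | h5
          · have := keyeq y c (by omega) hclt (hsub_uz y c h5 hc)
            omega
          · omega
          · rcases h5 with h5 | h5
            · omega
            · have h6 : y ∈ c :: z' := by
                rcases h5 with h5 | h5
                · simp [h5]
                · simp [h5]
              have := keyeq a y halt (by omega) (hsub_uz a y ha h6)
              omega
      subst hz
      have hwe' : w = u ++ [N, N] := by simpa using hwe
      refine ⟨u, hwe', ?_⟩
      have hsu : List.Sublist u w := by
        rw [hwe']; exact List.sublist_append_left u _
      exact ⟨⟨mp_snoc_inv (hwe' ▸ hp), avoids_of_sublist hsu h1221,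
        avoids_of_sublist hsu h2112⟩,
        avoids_of_sublist hsu h132, avoids_of_sublist hsu h231⟩
  · exfalso
    obtain ⟨x, hx⟩ := List.exists_mem_of_ne_nil v hv
    have hxlt := hv_lt x hx
    have key12 : ∀ y, 1 ≤ y → y < N → y = x := by
      intro y hy1 hylt
      have h2 := hcnt y hy1 hylt
      have h3 := hvcount y
      have h4 : y ∈ u ∨ y ∈ z := by
        by_cases h5 : 0 < u.count y
        · exact Or.inl (List.count_pos_iff.1 h5)
        · exact Or.inr (List.count_pos_iff.1 (by omega))
      rcases h4 with h5 | h5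
      · exact keyeq y x hylt hxlt (hsub_uv y x h5 hx)
      · exact (keyeq x y hxlt hylt (hsub_vz x y hx h5)).symm
    have e1 : (1:ℕ) = x := key12 1 (by omega) (by omega)
    have e2 : (2:ℕ) = x := key12 2 (by omega) (by omega)
    omega

-- chunk f: base case n = 2
lemma len_count12 : ∀ w : List ℕ, (∀ x ∈ w, x = 1 ∨ x = 2) →
    w.length = w.count 1 + w.count 2 := by
  intro w
  induction w with
  | nil => simp
  | cons x xs ih =>
    intro h
    have hx := h x (by simp)
    have h' : ∀ y ∈ xs, y = 1 ∨ y = 2 := fun y hy => h y (by simp [hy])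
    have := ih h'
    rcases hx with rfl | rfl <;>
      simp [List.count_cons, this] <;> omega

lemma avoid_of_mem12 {w : List ℕ} (h : ∀ x ∈ w, x = 1 ∨ x = 2)
    (h1 : ¬ List.Sublist [1,2,2,1] w) (h2 : ¬ List.Sublist [2,1,1,2] w) :
    Avoids w [1,2,2,1] ∧ Avoids w [2,1,1,2] ∧ Avoids w [1,3,2] ∧ Avoids w [2,3,1] := by
  refine ⟨?_, ?_, ?_, ?_⟩
  · intro hc
    obtain ⟨a, b, hab, hs⟩ := (contains1221_iff w).1 hc
    have ha := h a (hs.subset (by simp))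
    have hb := h b (hs.subset (by simp))
    have : a = 1 ∧ b = 2 := by omega
    obtain ⟨rfl, rfl⟩ := this
    exact h1 hs
  · intro hc
    obtain ⟨a, b, hab, hs⟩ := (contains2112_iff w).1 hc
    have ha := h a (hs.subset (by simp))
    have hb := h b (hs.subset (by simp))
    have : a = 1 ∧ b = 2 := by omega
    obtain ⟨rfl, rfl⟩ := this
    exact h2 hs
  · intro hc
    obtain ⟨a, b, c, hac, hcb, hs⟩ := (contains132_iff w).1 hc
    have ha := h a (hs.subset (by simp))
    have hb := h b (hs.subset (by simp))
    have hcc := h c (hs.subset (by simp))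
    omega
  · intro hc
    obtain ⟨a, b, c, hca, hab, hs⟩ := (contains231_iff w).1 hc
    have ha := h a (hs.subset (by simp))
    have hb := h b (hs.subset (by simp))
    have hcc := h c (hs.subset (by simp))
    omega

lemma mp2_cases {w : List ℕ} (hp : IsMultisetPerm 2 w) :
    ∀ x ∈ w, x = 1 ∨ x = 2 := by
  intro x hx
  have := mp_mem hp hx
  omega

lemma mp2_concrete : ∀ w ∈ ([[1,1,2,2],[1,2,1,2],[2,1,2,1],[2,2,1,1]] : List (List ℕ)),
    IsMultisetPerm 2 w := by
  intro w hw i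
  fin_cases hw <;>
  · rcases i with _ | _ | _ | j
    · decide
    · decide
    · decide
    · have h1 : (j+3) ∉ ([1,1,2,2] : List ℕ) := by simp
      have h2 : (j+3) ∉ ([1,2,1,2] : List ℕ) := by simp
      have h3 : (j+3) ∉ ([2,1,2,1] : List ℕ) := by simp
      have h4 : (j+3) ∉ ([2,2,1,1] : List ℕ) := by simp
      first
        | (rw [List.count_eq_zero_of_not_mem h1]; rw [if_neg (by omega)])
        | (rw [List.count_eq_zero_of_not_mem h2]; rw [if_neg (by omega)])
        | (rw [List.count_eq_zero_of_not_mem h3]; rw [if_neg (by omega)])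
        | (rw [List.count_eq_zero_of_not_mem h4]; rw [if_neg (by omega)])

lemma Sset_two : Sset 2 = {[1,1,2,2],[1,2,1,2],[2,1,2,1],[2,2,1,1]} := by
  ext w
  constructor
  · rintro ⟨⟨hp, h1221, h2112⟩, h132, h231⟩
    have h12 := mp2_cases hp
    have hc1 : w.count 1 = 2 := by have := hp 1; simpa using this
    have hc2 : w.count 2 = 2 := by have := hp 2; simpa using this
    have hlen : w.length = 4 := by rw [len_count12 w h12, hc1, hc2]
    rcases w with _|⟨a,_|⟨b,_|⟨c,_|⟨d,_|e⟩⟩⟩⟩ <;> simp at hlen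
    have ha := h12 a (by simp)
    have hb := h12 b (by simp)
    have hc := h12 c (by simp)
    have hd := h12 d (by simp)
    rcases ha with rfl | rfl <;> rcases hb with rfl | rfl <;>
      rcases hc with rfl | rfl <;> rcases hd with rfl | rfl <;>
      first
        | exact absurd hc1 (by decide)
        | exact absurd hc2 (by decide)
        | exact absurd ((contains1221_iff _).2 ⟨1, 2, by omega, by decide⟩) h1221
        | exact absurd ((contains2112_iff _).2 ⟨1, 2, by omega, by decide⟩) h2112
        | simp
  · intro hw
    have hw' : w ∈ ([[1,1,2,2],[1,2,1,2],[2,1,2,1],[2,2,1,1]] : List (List ℕ)) := by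
      simpa using hw
    have hp : IsMultisetPerm 2 w := mp2_concrete w hw'
    have h12 := mp2_cases hp
    have hs1 : ¬ List.Sublist [1,2,2,1] w := by fin_cases hw' <;> decide
    have hs2 : ¬ List.Sublist [2,1,1,2] w := by fin_cases hw' <;> decide
    obtain ⟨a1, a2, a3, a4⟩ := avoid_of_mem12 h12 hs1 hs2
    exact ⟨⟨hp, a1, a2⟩, a3, a4⟩

-- chunk g: counting
lemma Sset_fin_card : ∀ m, 2 ≤ m → (Sset m).Finite ∧ (Sset m).ncard = 2 ^ m := by
  intro m hm
  induction m, hm using Nat.le_induction with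
  | base =>
    rw [Sset_two]
    have hfin : ({[1,1,2,2],[1,2,1,2],[2,1,2,1],[2,2,1,1]} : Set (List ℕ)).Finite :=
      (Set.finite_singleton _).insert _ |>.insert _ |>.insert _
    refine ⟨hfin, ?_⟩
    rw [Set.ncard_insert_of_notMem (by simp)
        ((Set.finite_singleton _).insert _ |>.insert _),
      Set.ncard_insert_of_notMem (by simp) ((Set.finite_singleton _).insert _),
      Set.ncard_insert_of_notMem (by simp) (Set.finite_singleton _),
      Set.ncard_singleton]
    norm_num
  | succ m hm ih =>
    obtain ⟨hfin, hcard⟩ := ih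
    have hset : Sset (m+1) =
        (fun w => (m+1)::(m+1)::w) '' Sset m ∪ (fun w => w ++ [m+1,m+1]) '' Sset m := by
      ext w
      constructor
      · intro hw
        rcases step_decomp hm hw with ⟨w', rfl, hw'⟩ | ⟨w', rfl, hw'⟩
        · exact Or.inl ⟨w', hw', rfl⟩
        · exact Or.inr ⟨w', hw', rfl⟩
      · rintro (⟨w', hw', rfl⟩ | ⟨w', hw', rfl⟩)
        · exact cons_mem_Sset hw'
        · exact snoc_mem_Sset hw'
    have hinj1 : Function.Injective (fun w : List ℕ => (m+1)::(m+1)::w) := by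
      intro a b h
      simpa using h
    have hinj2 : Function.Injective (fun w : List ℕ => w ++ [m+1,m+1]) :=
      List.append_left_injective _
    have hdisj : Disjoint ((fun w : List ℕ => (m+1)::(m+1)::w) '' Sset m)
        ((fun w : List ℕ => w ++ [m+1,m+1]) '' Sset m) := by
      rw [Set.disjoint_left]
      rintro w ⟨a, ha, rfl⟩ ⟨b, hb, heq⟩
      obtain ⟨⟨hpb, -, -⟩, -, -⟩ := hb
      rcases b with _ | ⟨x, b'⟩
      · simp only [List.nil_append, List.cons.injEq] at heq
        obtain ⟨⟨hpa, -, -⟩, -, -⟩ := ha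
        have h1 : (1:ℕ) ∈ a := mp_mem_of hpa (by omega) (by omega)
        rw [← heq.2.2] at h1
        simp at h1
      · have hx : x ∈ x::b' := by simp
        have h2 := (mp_mem hpb hx).2
        simp only [List.cons_append, List.cons.injEq] at heq
        omega
    constructor
    · rw [hset]
      exact (hfin.image _).union (hfin.image _)
    · rw [hset, Set.ncard_union_eq hdisj (hfin.image _) (hfin.image _),
        Set.ncard_image_of_injective _ hinj1, Set.ncard_image_of_injective _ hinj2,
        hcard, pow_succ]
      ring

theorem nonnesting_avoid_132_231 (n : ℕ) (hn : 2 ≤ n) :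
    {w : List ℕ | IsNonnesting n w ∧ Avoids w [1,3,2] ∧ Avoids w [2,3,1]}.ncard =
      2 ^ n :=
  (Sset_fin_card n hn).2
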